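/- Suppose g satisfies ‖g(x) - g(x*) - g'(x*)(x - x*)‖ ≤ L‖x - x*‖² near x*, where g(x*) = x*. Then for points x⁰,...,xᵐ near x* and weights ν with Σνᵢ = 1, |νᵢ| ≤ B, x̂ = Σνᵢxⁱ, ĝ = Σνᵢg(xⁱ): ‖g(x̂) - ĝ‖ ≤ L‖x̂ - x*‖² + B·L·Σᵢ ‖xⁱ - x*‖², and moreover ‖x̂ - x*‖² ≤ (m+1)B² Σᵢ ‖xⁱ - x*‖². -/

import Mathlib

theorem stmt_14 (n m : ℕ)
    (g : EuclideanSpace ℝ (Fin n) → EuclideanSpace ℝ (Fin n))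
    (xstar : EuclideanSpace ℝ (Fin n)) (hfix : g xstar = xstar)
    (A : EuclideanSpace ℝ (Fin n) →L[ℝ] EuclideanSpace ℝ (Fin n))
    (L B R : ℝ) (hL : 0 ≤ L) (hR : 0 < R)
    (hquad : ∀ y ∈ Metric.ball xstar R,
      ‖g y - g xstar - A (y - xstar)‖ ≤ L * ‖y - xstar‖ ^ 2)
    (x : Fin (m + 1) → EuclideanSpace ℝ (Fin n))
    (hx : ∀ i, x i ∈ Metric.ball xstar R)
    (ν : Fin (m + 1) → ℝ) (hν : ∑ i, ν i = 1) (hB : ∀ i, |ν i| ≤ B)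
    (hxhat : (∑ i, ν i • x i) ∈ Metric.ball xstar R) :
    ‖g (∑ i, ν i • x i) - ∑ i, ν i • g (x i)‖ ≤
        L * ‖(∑ i, ν i • x i) - xstar‖ ^ 2 + B * L * ∑ i, ‖x i - xstar‖ ^ 2 ∧
      ‖(∑ i, ν i • x i) - xstar‖ ^ 2 ≤ (m + 1) * B ^ 2 * ∑ i, ‖x i - xstar‖ ^ 2 := by
  set xh : EuclideanSpace ℝ (Fin n) := ∑ i, ν i • x i with hxh
  have hB0 : 0 ≤ B := le_trans (abs_nonneg _) (hB 0)
  have hdiff : xh - xstar = ∑ i, ν i • (x i - xstar) := by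
    simp [smul_sub, Finset.sum_sub_distrib, ← Finset.sum_smul, hν]
    exact hxh
  constructor
  · have key : g xh - ∑ i, ν i • g (x i) =
        (g xh - g xstar - A (xh - xstar))
          - ∑ i, ν i • (g (x i) - g xstar - A (x i - xstar)) := by
      have hA : A (xh - xstar) = ∑ i, ν i • A (x i - xstar) := by
        rw [hdiff, map_sum]; simp
      rw [hA]
      simp [smul_sub, Finset.sum_sub_distrib, ← Finset.sum_smul, hν, hfix]
    calc ‖g xh - ∑ i, ν i • g (x i)‖
        ≤ ‖g xh - g xstar - A (xh - xstar)‖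
          + ‖∑ i, ν i • (g (x i) - g xstar - A (x i - xstar))‖ := by
          rw [key]; exact norm_sub_le _ _
      _ ≤ L * ‖xh - xstar‖ ^ 2 + B * L * ∑ i, ‖x i - xstar‖ ^ 2 := by
          gcongr
          · exact hquad _ hxhat
          · calc ‖∑ i, ν i • (g (x i) - g xstar - A (x i - xstar))‖
                ≤ ∑ i, ‖ν i • (g (x i) - g xstar - A (x i - xstar))‖ :=
                norm_sum_le _ _
              _ ≤ ∑ i, B * (L * ‖x i - xstar‖ ^ 2) := by
                  apply Finset.sum_le_sum
                  intro i _
                  rw [norm_smul]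
                  exact mul_le_mul (hB i) (hquad _ (hx i)) (norm_nonneg _) hB0
              _ = B * L * ∑ i, ‖x i - xstar‖ ^ 2 := by
                  rw [Finset.mul_sum]; ring_nf
  · have h1 : ‖xh - xstar‖ ≤ B * ∑ i, ‖x i - xstar‖ := by
      rw [hdiff]
      calc ‖∑ i, ν i • (x i - xstar)‖ ≤ ∑ i, ‖ν i • (x i - xstar)‖ := norm_sum_le _ _
        _ ≤ ∑ i, B * ‖x i - xstar‖ := by
            apply Finset.sum_le_sum
            intro i _
            rw [norm_smul]
            exact mul_le_mul_of_nonneg_right (hB i) (norm_nonneg _)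
        _ = B * ∑ i, ‖x i - xstar‖ := (Finset.mul_sum _ _ _).symm
    have h2 : (∑ i, ‖x i - xstar‖) ^ 2 ≤ (m + 1) * ∑ i, ‖x i - xstar‖ ^ 2 := by
      have := sq_sum_le_card_mul_sum_sq (s := Finset.univ)
        (f := fun i : Fin (m + 1) => ‖x i - xstar‖)
      simpa using this
    calc ‖xh - xstar‖ ^ 2 ≤ (B * ∑ i, ‖x i - xstar‖) ^ 2 := by
          apply sq_le_sq' _ h1
          have : 0 ≤ B * ∑ i, ‖x i - xstar‖ :=
            mul_nonneg hB0 (Finset.sum_nonneg fun i _ => norm_nonneg _)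
          linarith [norm_nonneg (xh - xstar)]
      _ = B ^ 2 * (∑ i, ‖x i - xstar‖) ^ 2 := by ring
      _ ≤ B ^ 2 * ((m + 1) * ∑ i, ‖x i - xstar‖ ^ 2) := by
          exact mul_le_mul_of_nonneg_left h2 (sq_nonneg B)
      _ = (m + 1) * B ^ 2 * ∑ i, ‖x i - xstar‖ ^ 2 := by ring
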